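/- Every tensor in ℂ² ⊗ ℂ² ⊗ ℂ² can be written as a sum of at most three rank-one tensors a⊗b⊗c with a, b, c ∈ ℂ². (Consequence of the six-orbit classification: the maximal tensor rank in the 2×2×2 format is 3, attained by the W class.) -/

import Mathlib

open TensorProduct

noncomputable section

/-- The single-qubit space ℂ². -/
abbrev Qubit : Type := Fin 2 → ℂ

/-- The three-qubit Hilbert space ℂ² ⊗ ℂ² ⊗ ℂ². -/
abbrev ThreeQubit : Type := Qubit ⊗[ℂ] (Qubit ⊗[ℂ] Qubit)

/-- Standard basis vector e₀ of ℂ². -/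
def e0 : Qubit := ![1, 0]

/-- Standard basis vector e₁ of ℂ². -/
def e1 : Qubit := ![0, 1]

/-- SLOCC equivalence: ψ and φ are related by invertible local linear maps. -/
def SLOCC (ψ φ : ThreeQubit) : Prop :=
  ∃ g₁ g₂ g₃ : Qubit ≃ₗ[ℂ] Qubit,
    TensorProduct.map g₁.toLinearMap
      (TensorProduct.map g₂.toLinearMap g₃.toLinearMap) ψ = φ

def SepState : ThreeQubit := e0 ⊗ₜ[ℂ] (e0 ⊗ₜ[ℂ] e0)
def B1 : ThreeQubit := e0 ⊗ₜ[ℂ] (e0 ⊗ₜ[ℂ] e0) + e0 ⊗ₜ[ℂ] (e1 ⊗ₜ[ℂ] e1)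
def B2 : ThreeQubit := e0 ⊗ₜ[ℂ] (e0 ⊗ₜ[ℂ] e0) + e1 ⊗ₜ[ℂ] (e0 ⊗ₜ[ℂ] e1)
def B3 : ThreeQubit := e0 ⊗ₜ[ℂ] (e0 ⊗ₜ[ℂ] e0) + e1 ⊗ₜ[ℂ] (e1 ⊗ₜ[ℂ] e0)
def W : ThreeQubit := e1 ⊗ₜ[ℂ] (e0 ⊗ₜ[ℂ] e0) + e0 ⊗ₜ[ℂ] (e1 ⊗ₜ[ℂ] e0) + e0 ⊗ₜ[ℂ] (e0 ⊗ₜ[ℂ] e1)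
def GHZ : ThreeQubit := e0 ⊗ₜ[ℂ] (e0 ⊗ₜ[ℂ] e0) + e1 ⊗ₜ[ℂ] (e1 ⊗ₜ[ℂ] e1)


/-- Decompose a tensor in `Qubit ⊗ M` along the standard basis of the first factor. -/
lemma mySlice {M : Type*} [AddCommGroup M] [Module ℂ M] (ψ : Qubit ⊗[ℂ] M) :
    ∃ x y : M, ψ = e0 ⊗ₜ[ℂ] x + e1 ⊗ₜ[ℂ] y := by
  induction ψ using TensorProduct.induction_on with
  | zero => exact ⟨0, 0, by simp⟩
  | tmul a m =>
      refine ⟨a 0 • m, a 1 • m, ?_⟩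
      have ha : a = a 0 • e0 + a 1 • e1 := by
        funext i; fin_cases i <;> simp [e0, e1]
      conv_lhs => rw [ha]
      rw [add_tmul, smul_tmul, smul_tmul]
  | add p q hp hq =>
      obtain ⟨x, y, hx⟩ := hp
      obtain ⟨x', y', hy⟩ := hq
      exact ⟨x + x', y + y', by rw [hx, hy]; simp [tmul_add]; abel⟩

/-- Two vectors in ℂ² with vanishing determinant are proportional to a common vector. -/
lemma dep (v0 v1 : Qubit) (h : v0 0 * v1 1 - v0 1 * v1 0 = 0) :
    ∃ (α β : ℂ) (w : Qubit), v0 = α • w ∧ v1 = β • w := by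
  by_cases h0 : v0 = 0
  · exact ⟨0, 1, v1, by simp [h0], by simp⟩
  · by_cases ha : v0 0 ≠ 0
    · refine ⟨1, v1 0 / v0 0, v0, by simp, ?_⟩
      funext i; fin_cases i <;> simp [Pi.smul_apply, smul_eq_mul]
      · field_simp
      · field_simp; linear_combination h
    · push_neg at ha
      have hb : v0 1 ≠ 0 := by
        intro hb; apply h0; funext i; fin_cases i <;> simp [ha, hb]
      refine ⟨1, v1 1 / v0 1, v0, by simp, ?_⟩
      funext i; fin_cases i <;> simp [Pi.smul_apply, smul_eq_mul]
      · field_simp; linear_combination -h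
      · field_simp

/-- A nondegenerate quadratic over ℂ has a root. -/
lemma quad (a b c : ℂ) (ha : a ≠ 0) : ∃ l : ℂ, a * l ^ 2 + b * l + c = 0 := by
  obtain ⟨s, hs⟩ := IsAlgClosed.exists_pow_nat_eq (k := ℂ) (b ^ 2 - 4 * a * c)
    (by norm_num : (0:ℕ) < 2)
  refine ⟨(-b + s) / (2 * a), ?_⟩
  field_simp
  ring_nf
  linear_combination hs

/-- A nondegenerate 2×2 matrix pencil has a singular member. -/
lemma pencil (x00 x01 x10 x11 y00 y01 y10 y11 : ℂ)
    (hd : y00 * y11 - y01 * y10 ≠ 0) :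
    ∃ l : ℂ, (x00 - l * y00) * (x11 - l * y11) - (x01 - l * y01) * (x10 - l * y10) = 0 := by
  obtain ⟨l, hl⟩ := quad (y00 * y11 - y01 * y10)
    (-(x00 * y11 + x11 * y00 - x01 * y10 - x10 * y01)) (x00 * x11 - x01 * x10) hd
  exact ⟨l, by linear_combination hl⟩

/-- Every three-qubit tensor is a sum of at most three rank-one tensors
(the maximal tensor rank in the 2×2×2 format is 3). -/
theorem tensor_rank_le_three (ψ : ThreeQubit) :
    ∃ a b c a' b' c' a'' b'' c'' : Qubit,
      ψ = a ⊗ₜ[ℂ] (b ⊗ₜ[ℂ] c) + a' ⊗ₜ[ℂ] (b' ⊗ₜ[ℂ] c') + a'' ⊗ₜ[ℂ] (b'' ⊗ₜ[ℂ] c'') := by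
  obtain ⟨x, y, hxy⟩ := mySlice ψ
  obtain ⟨u00, u01, hx⟩ := mySlice x
  obtain ⟨u10, u11, hy⟩ := mySlice y
  by_cases hd : u10 0 * u11 1 - u10 1 * u11 0 = 0
  · obtain ⟨α, β, w, h1, h2⟩ := dep u10 u11 hd
    refine ⟨e0, e0, u00, e0, e1, u01, e1, α • e0 + β • e1, w, ?_⟩
    rw [hxy, hx, hy, h1, h2]
    simp only [tmul_add, add_tmul, tmul_smul, ← smul_tmul']
  · obtain ⟨l, hl⟩ := pencil (u00 0) (u00 1) (u01 0) (u01 1) (u10 0) (u10 1) (u11 0) (u11 1) hd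
    have hdep : (u00 - l • u10) 0 * (u01 - l • u11) 1
        - (u00 - l • u10) 1 * (u01 - l • u11) 0 = 0 := by
      simpa [Pi.sub_apply, Pi.smul_apply, smul_eq_mul] using hl
    obtain ⟨α, β, w, h1, h2⟩ := dep _ _ hdep
    refine ⟨e0, α • e0 + β • e1, w, l • e0 + e1, e0, u10, l • e0 + e1, e1, u11, ?_⟩
    rw [hxy, hx, hy, sub_eq_iff_eq_add.mp h1, sub_eq_iff_eq_add.mp h2]
    simp only [tmul_add, add_tmul, tmul_smul, ← smul_tmul']
    module

end
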